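/- Let x₁, …, x₆ ∈ ℝ² be six points such that the convex hull of {x₁,…,x₆} is within Hausdorff distance ε/10 of a regular hexagon H with circumradius 2 centered at x ∈ ℝ², where ε < 0.1. Then the six rays from x through the points x_i divide the plane into six angular sectors each of angle at most 70°, and 2 < ‖x − x_i‖ < 2 + ε/2 for each i. -/

import Mathlib

open Real InnerProductGeometry

lemma hex_norm (a : ℝ) :
    ‖((WithLp.equiv 2 (Fin 2 → ℝ)).symm ![2 * Real.cos a, 2 * Real.sin a])‖ = 2 := by
  rw [EuclideanSpace.norm_eq]
  simp [Fin.sum_univ_two, mul_pow]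
  rw [show (2:ℝ)^2 * cos a ^2 + 2^2 * sin a ^2 = 2^2 by have := sin_sq_add_cos_sq a; nlinarith]
  rw [Real.sqrt_sq]; norm_num

lemma hex_inner (a b : ℝ) :
    (inner ℝ ((WithLp.equiv 2 (Fin 2 → ℝ)).symm ![2 * Real.cos a, 2 * Real.sin a])
     ((WithLp.equiv 2 (Fin 2 → ℝ)).symm ![2 * Real.cos b, 2 * Real.sin b]) : ℝ)
      = 4 * Real.cos (a - b) := by
  rw [PiLp.inner_apply]
  simp [Fin.sum_univ_two, Real.cos_sub]
  ring

lemma hex_cos (θ : ℝ) (i : Fin 6) :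
    Real.cos ((θ + (i : ℕ) * Real.pi / 3) - (θ + ((i + 1 : Fin 6) : ℕ) * Real.pi / 3)) = 1/2 := by
  fin_cases i <;> simp only [Fin.isValue, Fin.val_add] <;> norm_num
  · rw [show Real.pi/3 - 2*Real.pi/3 = -(Real.pi/3) by ring, Real.cos_neg, Real.cos_pi_div_three]
  · rw [show (2:ℝ)*Real.pi/3 = Real.pi - Real.pi/3 by ring, Real.cos_pi_sub,
      Real.cos_pi_div_three]; norm_num
  · rw [show (4:ℝ)*Real.pi/3 = Real.pi - (-(Real.pi/3)) by ring, Real.cos_pi_sub,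
      Real.cos_neg, Real.cos_pi_div_three]; norm_num
  · rw [show (4:ℝ)*Real.pi/3 - 5*Real.pi/3 = -(Real.pi/3) by ring, Real.cos_neg,
      Real.cos_pi_div_three]
  · rw [show (5:ℝ)*Real.pi/3 = 2*Real.pi - Real.pi/3 by ring, Real.cos_two_pi_sub,
      Real.cos_pi_div_three]

/-- Six points `p i` within Hausdorff/vertexwise distance `ε/10` of the
vertices `v i = x + 2·(cos(θ + iπ/3), sin(θ + iπ/3))` of a regular hexagon of
circumradius `2` centered at `x`, with `‖x - p i‖ > 2` and `ε < 0.1`, have consecutive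
ray angles at `x` of at most `70°`, and `2 < ‖x - p i‖ < 2 + ε/2` for each `i`. -/
theorem stmt_9 (ε θ : ℝ) (hε : 0 < ε) (hε1 : ε < 0.1)
    (x : EuclideanSpace ℝ (Fin 2))
    (p v : Fin 6 → EuclideanSpace ℝ (Fin 2))
    (hv : ∀ i : Fin 6, v i = x + (WithLp.equiv 2 (Fin 2 → ℝ)).symm
      ![2 * Real.cos (θ + (i : ℕ) * Real.pi / 3),
        2 * Real.sin (θ + (i : ℕ) * Real.pi / 3)])
    (hclose : ∀ i : Fin 6, dist (p i) (v i) ≤ ε / 10)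
    (hfar : ∀ i : Fin 6, 2 < dist x (p i)) :
    (∀ i : Fin 6,
        InnerProductGeometry.angle (p i - x) (p (i + 1) - x) ≤ 70 * Real.pi / 180)
      ∧ ∀ i : Fin 6, 2 < dist x (p i) ∧ dist x (p i) < 2 + ε / 2 := by
  have hε10 : ε / 10 ≤ 0.01 := by norm_num at hε1 ⊢; linarith
  have hvsub : ∀ i : Fin 6, v i - x = (WithLp.equiv 2 (Fin 2 → ℝ)).symm
      ![2 * Real.cos (θ + (i : ℕ) * Real.pi / 3),
        2 * Real.sin (θ + (i : ℕ) * Real.pi / 3)] := by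
    intro i; rw [hv i]; abel
  have hnv : ∀ i : Fin 6, ‖v i - x‖ = 2 := by
    intro i; rw [hvsub i]; exact hex_norm _
  have hdxv : ∀ i : Fin 6, dist x (v i) = 2 := by
    intro i; rw [dist_eq_norm, ← norm_neg]; rw [show -(x - v i) = v i - x by abel]; exact hnv i
  have hdxp : ∀ i : Fin 6, dist x (p i) = ‖p i - x‖ := by
    intro i; rw [dist_eq_norm, ← norm_neg]; congr 1; abel
  have hpe : ∀ i : Fin 6, ‖(p i - x) - (v i - x)‖ ≤ 0.01 := by
    intro i
    rw [show (p i - x) - (v i - x) = p i - v i by abel, ← dist_eq_norm]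
    exact (hclose i).trans hε10
  have hnp_ub : ∀ i : Fin 6, ‖p i - x‖ ≤ 2.01 := by
    intro i
    calc ‖p i - x‖ = ‖(v i - x) + ((p i - x) - (v i - x))‖ := by congr 1; abel
    _ ≤ ‖v i - x‖ + ‖(p i - x) - (v i - x)‖ := norm_add_le _ _
    _ ≤ 2 + 0.01 := by rw [hnv i]; linarith [hpe i]
    _ = 2.01 := by norm_num
  refine ⟨?_, ?_⟩
  · intro i
    set a := p i - x with ha
    set b := p (i + 1) - x with hb
    set u := v i - x with hu
    set w := v (i + 1) - x with hw
    have hiuw : (inner ℝ u w : ℝ) = 2 := by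
      rw [hu, hw, hvsub i, hvsub (i+1), hex_inner, hex_cos θ i]; norm_num
    have h1 : |(inner ℝ u (b - w) : ℝ)| ≤ 2 * 0.01 := by
      calc |(inner ℝ u (b - w) : ℝ)| ≤ ‖u‖ * ‖b - w‖ := abs_real_inner_le_norm _ _
      _ ≤ 2 * 0.01 := by
          rw [hu, hnv i]
          exact mul_le_mul_of_nonneg_left (hpe (i+1)) (by norm_num)
    have h2 : |(inner ℝ (a - u) w : ℝ)| ≤ 0.01 * 2 := by
      calc |(inner ℝ (a - u) w : ℝ)| ≤ ‖a - u‖ * ‖w‖ := abs_real_inner_le_norm _ _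
      _ ≤ 0.01 * 2 := by
          rw [hw, hnv (i+1)]
          exact mul_le_mul_of_nonneg_right (hpe i) (by norm_num)
    have h3 : |(inner ℝ (a - u) (b - w) : ℝ)| ≤ 0.01 * 0.01 := by
      calc |(inner ℝ (a - u) (b - w) : ℝ)| ≤ ‖a - u‖ * ‖b - w‖ := abs_real_inner_le_norm _ _
      _ ≤ 0.01 * 0.01 := mul_le_mul (hpe i) (hpe (i+1)) (norm_nonneg _) (by norm_num)
    have hiab : (inner ℝ a b : ℝ) ≥ 1.9599 := by
      have hdecomp : (inner ℝ a b : ℝ) = inner ℝ u w + inner ℝ u (b - w) + inner ℝ (a - u) w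
          + inner ℝ (a - u) (b - w) := by
        have key : (inner ℝ (u + (a - u)) (w + (b - w)) : ℝ)
            = inner ℝ u w + inner ℝ u (b - w) + inner ℝ (a - u) w + inner ℝ (a - u) (b - w) := by
          simp only [inner_add_left, inner_add_right]; ring
        rw [show u + (a - u) = a by abel, show w + (b - w) = b by abel] at key
        exact key
      rw [hdecomp, hiuw]
      have e1 := abs_le.mp h1
      have e2 := abs_le.mp h2
      have e3 := abs_le.mp h3
      norm_num at e1 e2 e3 ⊢
      linarith [e1.1, e2.1, e3.1]
    have hnab : ‖a‖ * ‖b‖ ≤ 2.01 * 2.01 :=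
      mul_le_mul (hnp_ub i) (hnp_ub (i+1)) (norm_nonneg _) (by norm_num)
    have hnabpos : 0 < ‖a‖ * ‖b‖ := by
      have h1 := hfar i; have h2 := hfar (i+1)
      rw [hdxp i] at h1; rw [hdxp (i+1)] at h2
      rw [ha, hb]; positivity
    have hcosangle : (0.35 : ℝ) ≤ Real.cos (angle a b) := by
      rw [cos_angle, le_div_iff₀ hnabpos]
      nlinarith
    by_contra hcon
    push_neg at hcon
    have hlt : Real.cos (angle a b) < Real.cos (70 * Real.pi / 180) :=
      Real.cos_lt_cos_of_nonneg_of_le_pi (by positivity) (angle_le_pi a b) hcon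
    have h70 : Real.cos (70 * Real.pi / 180) = Real.sin (Real.pi / 9) := by
      rw [show 70 * Real.pi / 180 = Real.pi / 2 - Real.pi / 9 by ring, Real.cos_pi_div_two_sub]
    have hsin : Real.sin (Real.pi / 9) ≤ 0.35 := by
      have h1 := Real.sin_le (le_of_lt (by positivity : (0:ℝ) < Real.pi / 9))
      have h2 := Real.pi_lt_d2
      norm_num at h1 h2 ⊢; linarith
    rw [h70] at hlt
    linarith
  · intro i
    refine ⟨hfar i, ?_⟩
    calc dist x (p i) ≤ dist x (v i) + dist (v i) (p i) := dist_triangle _ _ _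
    _ = 2 + dist (p i) (v i) := by rw [hdxv i, dist_comm]
    _ ≤ 2 + ε / 10 := by linarith [hclose i]
    _ < 2 + ε / 2 := by linarith
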